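/- Let η belong to an irreducible component C of a general KCM, let x ∈ {η}_L^ω be a site in the closure of η, and suppose η_x ∉ I_x. Then every configuration η′ ∈ S_L with η′_y = η_y for all y ∈ L∖{x} (and η′_x ∈ S_x arbitrary) also belongs to C. -/

import Mathlib

open scoped Classical

namespace KCM

/-- A full configuration assigns a state to every site of `ℤ`.  The boundary
condition is the restriction of a configuration outside the volume. -/
abbrev Config (S : ℤ → Type) : Type := ∀ x : ℤ, S x

variable {S : ℤ → Type}

/-- The constraint at site `x` is satisfied in configuration `η`: some update
rule of `x` has all its sites infected. -/
def Constraint (I : ∀ x : ℤ, Set (S x)) (U : ℤ → Finset (Finset ℤ)) (x : ℤ)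
    (η : Config S) : Prop :=
  ∃ u ∈ U x, ∀ y ∈ u, η y ∈ I y

/-- A legal transition of the KCM on volume `L`: the two configurations agree
off a single site `x ∈ L` whose constraint is satisfied. -/
def Step (I : ∀ x : ℤ, Set (S x)) (U : ℤ → Finset (Finset ℤ)) (L : Finset ℤ)
    (η η' : Config S) : Prop :=
  ∃ x ∈ L, Constraint I U x η ∧ ∀ y : ℤ, y ≠ x → η' y = η y

/-- `η` and `η'` belong to the same irreducible component of the KCM on volume
`L` (connected component of the transition graph on configurations). -/
def Reach (I : ∀ x : ℤ, Set (S x)) (U : ℤ → Finset (Finset ℤ)) (L : Finset ℤ)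
    (η η' : Config S) : Prop :=
  Relation.ReflTransGen (fun ζ ζ' => Step I U L ζ ζ' ∨ Step I U L ζ' ζ) η η'

/-- The closure `{η}_L^ω`: the set of sites of `L` whose state can eventually
be updated starting from `η`. -/
def closure (I : ∀ x : ℤ, Set (S x)) (U : ℤ → Finset (Finset ℤ)) (L : Finset ℤ)
    (η : Config S) : Set ℤ :=
  {x | x ∈ L ∧ ∃ η', Reach I U L η η' ∧ Constraint I U x η'}

/-- Replace the states of `η` inside `Λ` by `ξ`. -/
def glue (Λ : Finset ℤ) (η : Config S) (ξ : ∀ x : {y : ℤ // y ∈ Λ}, S x.1) :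
    Config S :=
  fun x => if h : x ∈ Λ then ξ ⟨x, h⟩ else η x

variable [∀ x, Fintype (S x)]

/-- Expectation of `f` when the states of `η` inside `Λ` are resampled from the
product of the measures `π x`, `x ∈ Λ`, conditioned on the event `P`. -/
noncomputable def expOn (π : ∀ x : ℤ, S x → ℝ) (Λ : Finset ℤ)
    (P : Config S → Prop) (η : Config S) (f : Config S → ℝ) : ℝ :=
  (∑ ξ : ∀ x : {y : ℤ // y ∈ Λ}, S x.1,
      if P (glue Λ η ξ) then (∏ x : {y : ℤ // y ∈ Λ}, π x.1 (ξ x)) * f (glue Λ η ξ) else 0) /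
  (∑ ξ : ∀ x : {y : ℤ // y ∈ Λ}, S x.1,
      if P (glue Λ η ξ) then (∏ x : {y : ℤ // y ∈ Λ}, π x.1 (ξ x)) else 0)

/-- Variance of `f` when the states of `η` inside `Λ` are resampled from the
product of the measures `π x`, `x ∈ Λ`, conditioned on the event `P`. -/
noncomputable def varOn (π : ∀ x : ℤ, S x → ℝ) (Λ : Finset ℤ)
    (P : Config S → Prop) (η : Config S) (f : Config S → ℝ) : ℝ :=
  expOn π Λ P η (fun ζ => (f ζ - expOn π Λ P η f) ^ 2)


/-- If `x` is in the closure of `η` and `η` is not infected at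
`x`, then changing the state at `x` arbitrarily stays in the same irreducible
component. -/
theorem statement3 (S : ℤ → Type) [∀ x, Fintype (S x)] (L : Finset ℤ)
    (q R : ℝ)
    (hq0 : 0 < q) (hq1 : q ≤ 1) (hR : 1 ≤ R)
    (π : ∀ x : ℤ, S x → ℝ) (I : ∀ x : ℤ, Set (S x)) (U : ℤ → Finset (Finset ℤ))
    (hπpos : ∀ (x : ℤ) (s : S x), 0 < π x s)
    (hπsum : ∀ x : ℤ, ∑ s : S x, π x s = 1)
    (hπI : ∀ x : ℤ, q ≤ ∑ s : S x, if s ∈ I x then π x s else 0)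
    (hUx : ∀ x ∈ L, ∀ u ∈ U x, x ∉ u)
    (hUR : ∀ x ∈ L, ∀ u ∈ U x, ∀ y ∈ u, ((|y - x| : ℤ) : ℝ) ≤ R)
    (η : Config S) (x : ℤ) (hx : x ∈ closure I U L η) (hηx : η x ∉ I x)
    (η' : Config S) (hη' : ∀ y : ℤ, y ≠ x → η' y = η y) :
    Reach I U L η η' := by
  classical
  obtain ⟨hxL, ζs, hreach, hcon⟩ := hx
  set a := η' x with ha
  have hη'eq : η' = Function.update η x a := by
    funext y
    by_cases hy : y = x
    · subst hy; simp [ha]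
    · rw [Function.update_of_ne hy]; exact hη' y hy
  have hRsymm : Symmetric (Reach I U L) :=
    fun _ _ h => by
      unfold Reach at h ⊢
      induction h with
      | refl => exact Relation.ReflTransGen.refl
      | tail _ hs ih => exact Relation.ReflTransGen.head (Or.symm hs) ih
  -- transferring a constraint at z across an update at a non-infected site x
  have hconupd : ∀ (z : ℤ) (ζ : Config S), ζ x ∉ I x → Constraint I U z ζ →
      Constraint I U z (Function.update ζ x a) := by
    intro z ζ hζx ⟨u, hu, hinf⟩
    refine ⟨u, hu, fun y hy => ?_⟩
    have hyx : y ≠ x := by rintro rfl; exact hζx (hinf y hy)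
    rw [Function.update_of_ne hyx]; exact hinf y hy
  -- main invariant along the path
  have key : ∀ ζ, Reach I U L η ζ →
      Reach I U L η η' ∨ (ζ x = η x ∧ Reach I U L η' (Function.update ζ x a)) := by
    intro ζ h
    have h' : Relation.ReflTransGen
        (fun ζ ζ' => Step I U L ζ ζ' ∨ Step I U L ζ' ζ) η ζ := h
    clear h
    induction h' with
    | refl =>
      refine Or.inr ⟨rfl, ?_⟩
      rw [← hη'eq]; exact Relation.ReflTransGen.refl
    | @tail b c hb hstep ih =>
      have hRb : Reach I U L η b := hb
      have hRc : Reach I U L η c := hRb.tail hstep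
      rcases ih with hdone | ⟨hbx, hmir⟩
      · exact Or.inl hdone
      have hbxI : b x ∉ I x := by rw [hbx]; exact hηx
      rcases hstep with ⟨z, hzL, hconz, hagree⟩ | ⟨z, hzL, hconz, hagree⟩
      · -- forward step b → c at z, Constraint z b, ∀ y ≠ z, c y = b y
        by_cases hzx : z = x
        · subst hzx
          -- constraint at x holds at b: flip x at b directly
          left
          have hstepb : Step I U L b (Function.update b z a) :=
            ⟨z, hzL, hconz, fun y hy => Function.update_of_ne hy _ _⟩
          have h1 : Reach I U L η (Function.update b z a) := hRb.tail (Or.inl hstepb)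
          exact h1.trans (hRsymm hmir)
        · -- mirror the step
          have hcxbx : c x = b x := hagree x (fun h => hzx h.symm)
          have hcon' : Constraint I U z (Function.update b x a) := hconupd z b hbxI hconz
          have hstep' : Step I U L (Function.update b x a) (Function.update c x a) := by
            refine ⟨z, hzL, hcon', fun y hy => ?_⟩
            by_cases hyx : y = x
            · subst hyx; simp
            · rw [Function.update_of_ne hyx, Function.update_of_ne hyx]
              exact hagree y hy
          exact Or.inr ⟨hcxbx.trans hbx, hmir.tail (Or.inl hstep')⟩
      · -- backward step c → b at z, Constraint z c, ∀ y ≠ z, b y = c y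
        by_cases hzx : z = x
        · subst hzx
          left
          have hstepc : Step I U L c (Function.update c z a) :=
            ⟨z, hzL, hconz, fun y hy => Function.update_of_ne hy _ _⟩
          have h1 : Reach I U L η (Function.update c z a) := hRc.tail (Or.inl hstepc)
          have hupd : Function.update c z a = Function.update b z a := by
            funext y
            by_cases hy : y = z
            · subst hy; simp
            · rw [Function.update_of_ne hy, Function.update_of_ne hy]
              exact (hagree y hy).symm
          rw [hupd] at h1
          exact h1.trans (hRsymm hmir)
        · have hcxbx : c x = b x := (hagree x (fun h => hzx h.symm)).symm
          have hcxI : c x ∉ I x := by rw [hcxbx, hbx]; exact hηx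
          have hcon' : Constraint I U z (Function.update c x a) := hconupd z c hcxI hconz
          have hstep' : Step I U L (Function.update c x a) (Function.update b x a) := by
            refine ⟨z, hzL, hcon', fun y hy => ?_⟩
            by_cases hyx : y = x
            · subst hyx; simp
            · rw [Function.update_of_ne hyx, Function.update_of_ne hyx]
              exact hagree y hy
          exact Or.inr ⟨hcxbx.trans hbx, hmir.tail (Or.inr hstep')⟩
  rcases key ζs hreach with hdone | ⟨_, hmir⟩
  · exact hdone
  · have hstep : Step I U L ζs (Function.update ζs x a) :=
      ⟨x, hxL, hcon, fun y hy => Function.update_of_ne hy _ _⟩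
    have h1 : Reach I U L η (Function.update ζs x a) := hreach.tail (Or.inl hstep)
    exact h1.trans (hRsymm hmir)

end KCM
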